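/- Let T(s) = diag(T_1(s),…,T_N(s)) where each T_i(s) is a stable strictly positive real square transfer matrix, and let Z ∈ ℝ^{N m × N m} be a constant matrix with Z + Z^T > 0. Then det[I + T(s) Z] ≠ 0 for all s with Re(s) ≥ 0. -/

import Mathlib

open Matrix Kronecker ComplexOrder

lemma blockDiagonal_quadForm {m N : ℕ} (M : Fin N → Matrix (Fin m) (Fin m) ℂ)
    (v : Fin m × Fin N → ℂ) :
    star v ⬝ᵥ (Matrix.blockDiagonal M *ᵥ v) =
      ∑ k, star (fun j => v (j, k)) ⬝ᵥ (M k *ᵥ fun j => v (j, k)) := by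
  simp only [dotProduct, Matrix.mulVec, Pi.star_apply, Matrix.blockDiagonal_apply,
    Fintype.sum_prod_type, ite_mul, zero_mul]
  rw [Finset.sum_comm]
  refine Finset.sum_congr rfl fun k _ => Finset.sum_congr rfl fun i _ => ?_
  congr 1
  rw [Finset.sum_comm]
  simp

lemma posDef_blockDiagonal {m N : ℕ} (M : Fin N → Matrix (Fin m) (Fin m) ℂ)
    (h : ∀ i, (M i).PosDef) : (Matrix.blockDiagonal M).PosDef := by
  rw [Matrix.posDef_iff_dotProduct_mulVec]
  constructor
  · rw [Matrix.IsHermitian, Matrix.blockDiagonal_conjTranspose]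
    exact congrArg _ (funext fun i => (h i).1)
  · intro v hv
    rw [blockDiagonal_quadForm]
    obtain ⟨⟨i0, k0⟩, hik⟩ : ∃ p, v p ≠ 0 := by
      by_contra hc
      push_neg at hc
      exact hv (funext hc)
    refine Finset.sum_pos' (fun k _ => (h k).posSemidef.dotProduct_mulVec_nonneg _) ⟨k0, Finset.mem_univ _, ?_⟩
    exact (h k0).dotProduct_mulVec_pos (x := fun j => v (j, k0)) (fun h0 => hik (congrFun h0 i0))

lemma posDef_map {n : Type*} [Fintype n] [DecidableEq n] (M : Matrix n n ℝ) (hM : M.PosDef) :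
    (M.map Complex.ofReal).PosDef := by
  have herm : (M.map Complex.ofReal).IsHermitian := by
    ext i j
    simpa [Matrix.conjTranspose_apply, Matrix.map_apply] using
      congrFun (congrFun hM.1 i) j
  refine .of_dotProduct_mulVec_pos herm fun x hx => ?_
  set z := star x ⬝ᵥ (M.map Complex.ofReal *ᵥ x) with hz
  have him : z.im = 0 := by
    have hstar : star z = z := by
      conv_lhs => rw [hz, Matrix.star_dotProduct, star_star, Matrix.star_mulVec,
        herm.eq, ← Matrix.dotProduct_mulVec]
    have := congrArg Complex.im hstar
    simp only [Complex.star_def, Complex.conj_im] at this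
    linarith
  have hre : 0 < z.re := by
    have hzre : z.re = (fun i => (x i).re) ⬝ᵥ (M *ᵥ fun i => (x i).re)
        + (fun i => (x i).im) ⬝ᵥ (M *ᵥ fun i => (x i).im) := by
      rw [hz]
      simp only [dotProduct, Matrix.mulVec, Pi.star_apply, Finset.mul_sum,
        ← Finset.sum_add_distrib]
      rw [Complex.re_sum]
      refine Finset.sum_congr rfl fun i _ => ?_
      rw [Complex.re_sum]
      refine Finset.sum_congr rfl fun j _ => ?_
      simp only [Complex.mul_re, Complex.mul_im, Complex.ofReal_re, Complex.ofReal_im,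
        Pi.star_apply, Complex.star_def, Complex.conj_re, Complex.conj_im, Matrix.map_apply]
      ring
    rcases Classical.em ((fun i => (x i).re) = 0) with hr | hr
    · have hi : (fun i => (x i).im) ≠ 0 := by
        intro hi
        apply hx
        funext i
        have h1 := congrFun hr i
        have h2 := congrFun hi i
        simp only [Pi.zero_apply] at h1 h2
        exact Complex.ext h1 h2
      have h1 : (0:ℝ) ≤ (fun i => (x i).re) ⬝ᵥ (M *ᵥ fun i => (x i).re) := by
        simpa using hM.posSemidef.dotProduct_mulVec_nonneg (fun i => (x i).re)
      have h2 : (0:ℝ) < (fun i => (x i).im) ⬝ᵥ (M *ᵥ fun i => (x i).im) := by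
        simpa using hM.dotProduct_mulVec_pos hi
      linarith [hzre]
    · have h1 : (0:ℝ) < (fun i => (x i).re) ⬝ᵥ (M *ᵥ fun i => (x i).re) := by
        simpa using hM.dotProduct_mulVec_pos hr
      have h2 : (0:ℝ) ≤ (fun i => (x i).im) ⬝ᵥ (M *ᵥ fun i => (x i).im) := by
        simpa using hM.posSemidef.dotProduct_mulVec_nonneg (fun i => (x i).im)
      linarith [hzre]
  rw [Complex.lt_def]
  exact ⟨by simpa using hre, by simp [him]⟩

/-- If T(s) = diag(T_1(s),…,T_N(s)) with each T_i a stable strictly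
positive real m×m transfer matrix (so that T_i(s) + T_i(s)* > 0 throughout the
closed right half-plane), and Z is a constant real matrix with Z + Zᵀ > 0, then
det[I + T(s)Z] ≠ 0 for all s with Re(s) ≥ 0. -/
theorem stmt7 {N m : ℕ} (T : Fin N → ℂ → Matrix (Fin m) (Fin m) ℂ)
    (hspr : ∀ i, ∀ s : ℂ, 0 ≤ s.re → ((T i s) + (T i s)ᴴ).PosDef)
    (Z : Matrix (Fin m × Fin N) (Fin m × Fin N) ℝ)
    (hZ : (Z + Zᵀ).PosDef) :
    ∀ s : ℂ, 0 ≤ s.re →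
      ((1 : Matrix (Fin m × Fin N) (Fin m × Fin N) ℂ) +
        Matrix.blockDiagonal (fun i => T i s) * Z.map Complex.ofReal).det ≠ 0 := by
  intro s hs hdet
  set B := Matrix.blockDiagonal (fun i => T i s) with hB
  set Zc := Z.map Complex.ofReal with hZc
  obtain ⟨v, hv0, hv⟩ := (Matrix.exists_mulVec_eq_zero_iff).2 hdet
  have hveq : v = -(B *ᵥ (Zc *ᵥ v)) := by
    have := hv
    rw [Matrix.add_mulVec, Matrix.one_mulVec, ← Matrix.mulVec_mulVec] at this
    linear_combination (norm := module) this
  set w := Zc *ᵥ v with hw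
  have hwne : w ≠ 0 := by
    intro hw0
    apply hv0
    rw [hveq, hw0]
    simp
  -- conjugate transpose of Zc
  have hZct : Zcᴴ = Zᵀ.map Complex.ofReal := by
    ext i j
    simp [hZc, Matrix.conjTranspose_apply, Matrix.map_apply]
  -- the two quadratic forms
  have hBpos : (B + Bᴴ).PosDef := by
    rw [hB, Matrix.blockDiagonal_conjTranspose, ← Matrix.blockDiagonal_add]
    exact posDef_blockDiagonal _ (fun i => hspr i s hs)
  have hZpos : (((Z + Zᵀ).map Complex.ofReal)).PosDef := posDef_map _ hZ
  have hP : 0 < star w ⬝ᵥ ((B + Bᴴ) *ᵥ w) := hBpos.dotProduct_mulVec_pos hwne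
  have hQ : 0 < star v ⬝ᵥ (((Z + Zᵀ).map Complex.ofReal) *ᵥ v) :=
    hZpos.dotProduct_mulVec_pos hv0
  have hmap : (Z + Zᵀ).map Complex.ofReal = Zc + Zcᴴ := by
    rw [hZct]
    ext i j
    simp [Matrix.map_apply, hZc]
  have key : star v ⬝ᵥ (((Z + Zᵀ).map Complex.ofReal) *ᵥ v)
      = -(star w ⬝ᵥ ((B + Bᴴ) *ᵥ w)) := by
    rw [hmap, Matrix.add_mulVec, dotProduct_add]
    have h1 : star v ⬝ᵥ (Zc *ᵥ v) = -(star w ⬝ᵥ (Bᴴ *ᵥ w)) := by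
      rw [← hw]
      conv_lhs => rw [hveq]
      rw [star_neg, Matrix.star_mulVec, neg_dotProduct,
        ← Matrix.dotProduct_mulVec]
    have h2 : star v ⬝ᵥ (Zcᴴ *ᵥ v) = -(star w ⬝ᵥ (B *ᵥ w)) := by
      rw [Matrix.dotProduct_mulVec, ← Matrix.star_mulVec, ← hw]
      conv_lhs => rw [hveq]
      simp
    rw [h1, h2, Matrix.add_mulVec, dotProduct_add]
    ring
  rw [key] at hQ
  have := add_pos hP hQ
  simp at this
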